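/- For finite probability spaces X, Y and independent products X^n, Y^n, the sequence a_n := ikd(X^n, Y^n) is subadditive: a_{m+n} ≤ a_m + a_n. Consequently the limit lim_{n→∞} ikd(X^n, Y^n)/n exists and equals inf_n ikd(X^n, Y^n)/n. -/
import Mathlib

open scoped BigOperators
open Filter

noncomputable def shannonEntropy {α : Type*} [Fintype α] (p : α → ℝ) : ℝ :=
  -∑ a, p a * Real.log (p a)

def IsProb {α : Type*} [Fintype α] (p : α → ℝ) : Prop :=
  (∀ a, 0 ≤ p a) ∧ ∑ a, p a = 1

def IsCoupling {α β : Type*} [Fintype α] [Fintype β]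
    (p : α → ℝ) (q : β → ℝ) (K : α × β → ℝ) : Prop :=
  IsProb K ∧ (∀ a, ∑ b, K (a, b) = p a) ∧ (∀ b, ∑ a, K (a, b) = q b)

noncomputable def kd {α β : Type*} [Fintype α] [Fintype β]
    (p : α → ℝ) (q : β → ℝ) (K : α × β → ℝ) : ℝ :=
  (shannonEntropy K - shannonEntropy p) + (shannonEntropy K - shannonEntropy q)

noncomputable def ikd {α β : Type*} [Fintype α] [Fintype β]
    (p : α → ℝ) (q : β → ℝ) : ℝ :=
  sInf { d : ℝ | ∃ K : α × β → ℝ, IsCoupling p q K ∧ d = kd p q K }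

/-- The `n`-fold independent product of a distribution. -/
noncomputable def powDist {α : Type*} (p : α → ℝ) (n : ℕ) : (Fin n → α) → ℝ :=
  fun f => ∏ i, p (f i)

section Helpers

variable {α β : Type*} [Fintype α] [Fintype β]

lemma sum_prod_fst_snd (f : α → ℝ) (g : β → ℝ) :
    ∑ x : α × β, f x.1 * g x.2 = (∑ a, f a) * (∑ b, g b) := by
  rw [Finset.sum_mul_sum, Fintype.sum_prod_type]

lemma isProb_powDist {p : α → ℝ} (hp : IsProb p) (n : ℕ) : IsProb (powDist p n) := by
  classical
  constructor
  · intro f; exact Finset.prod_nonneg fun i _ => hp.1 _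
  · have h := Fintype.prod_sum (fun (_ : Fin n) (a : α) => p a)
    have : ∑ x : Fin n → α, ∏ i, p (x i) = 1 := by
      rw [← h]; simp [hp.2]
    simpa [powDist] using this

lemma shannonEntropy_comp_equiv (e : β ≃ α) (r : α → ℝ) :
    shannonEntropy (fun b => r (e b)) = shannonEntropy r := by
  unfold shannonEntropy
  congr 1
  exact Equiv.sum_comp e (fun a => r a * Real.log (r a))

lemma shannonEntropy_prodMul {u : α → ℝ} {v : β → ℝ}
    (hu : IsProb u) (hv : IsProb v) :
    shannonEntropy (fun x : α × β => u x.1 * v x.2)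
      = shannonEntropy u + shannonEntropy v := by
  unfold shannonEntropy
  have key : ∀ x : α × β, u x.1 * v x.2 * Real.log (u x.1 * v x.2)
      = (u x.1 * Real.log (u x.1)) * v x.2 + u x.1 * (v x.2 * Real.log (v x.2)) := by
    rintro ⟨a, b⟩
    rcases eq_or_ne (u a) 0 with h | h
    · simp [h]
    rcases eq_or_ne (v b) 0 with h' | h'
    · simp [h']
    rw [Real.log_mul h h']; ring
  rw [Fintype.sum_congr _ _ key, Finset.sum_add_distrib,
    sum_prod_fst_snd (fun a => u a * Real.log (u a)) v,
    sum_prod_fst_snd u (fun b => v b * Real.log (v b)), hu.2, hv.2, mul_one, one_mul,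
    neg_add]

lemma shannonEntropy_fst_le {p : α → ℝ} {K : α × β → ℝ}
    (hK : ∀ x, 0 ≤ K x) (hmarg : ∀ a, ∑ b, K (a, b) = p a) :
    shannonEntropy p ≤ shannonEntropy K := by
  unfold shannonEntropy
  rw [neg_le_neg_iff]
  have hple : ∀ a b, K (a, b) ≤ p a := by
    intro a b
    rw [← hmarg a]
    exact Finset.single_le_sum (f := fun b => K (a, b)) (fun b _ => hK _) (Finset.mem_univ b)
  calc ∑ x : α × β, K x * Real.log (K x)
      ≤ ∑ x : α × β, K x * Real.log (p x.1) := by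
        refine Finset.sum_le_sum fun x _ => ?_
        rcases eq_or_lt_of_le (hK x) with h | h
        · simp [← h]
        · exact mul_le_mul_of_nonneg_left
            (Real.log_le_log h (hple x.1 x.2)) h.le
    _ = ∑ a, p a * Real.log (p a) := by
        rw [Fintype.sum_prod_type]
        refine Finset.sum_congr rfl fun a _ => ?_
        show (∑ y, K (a, y) * Real.log (p a)) = p a * Real.log (p a)
        rw [← Finset.sum_mul, hmarg a]

lemma shannonEntropy_snd_le {q : β → ℝ} {K : α × β → ℝ}
    (hK : ∀ x, 0 ≤ K x) (hmarg : ∀ b, ∑ a, K (a, b) = q b) :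
    shannonEntropy q ≤ shannonEntropy K := by
  have he : shannonEntropy (fun x : β × α => K (x.2, x.1)) = shannonEntropy K := by
    exact shannonEntropy_comp_equiv (Equiv.prodComm β α) K
  rw [← he]
  exact shannonEntropy_fst_le (fun x => hK _) (fun b => hmarg b)

lemma kd_nonneg {p : α → ℝ} {q : β → ℝ} {K : α × β → ℝ} (h : IsCoupling p q K) :
    0 ≤ kd p q K := by
  have h1 := shannonEntropy_fst_le h.1.1 h.2.1
  have h2 := shannonEntropy_snd_le h.1.1 h.2.2
  unfold kd; linarith

lemma prodCoupling_isCoupling {p : α → ℝ} {q : β → ℝ} (hp : IsProb p) (hq : IsProb q) :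
    IsCoupling p q (fun x => p x.1 * q x.2) := by
  refine ⟨⟨fun x => mul_nonneg (hp.1 _) (hq.1 _), ?_⟩, fun a => ?_, fun b => ?_⟩
  · rw [sum_prod_fst_snd p q, hp.2, hq.2, mul_one]
  · show (∑ b, p a * q b) = p a
    rw [← Finset.mul_sum, hq.2, mul_one]
  · show (∑ a, p a * q b) = q b
    rw [← Finset.sum_mul, hp.2, one_mul]

lemma couplingSet_nonempty {p : α → ℝ} {q : β → ℝ} (hp : IsProb p) (hq : IsProb q) :
    {d : ℝ | ∃ K : α × β → ℝ, IsCoupling p q K ∧ d = kd p q K}.Nonempty :=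
  ⟨_, _, prodCoupling_isCoupling hp hq, rfl⟩

lemma couplingSet_bddBelow (p : α → ℝ) (q : β → ℝ) :
    BddBelow {d : ℝ | ∃ K : α × β → ℝ, IsCoupling p q K ∧ d = kd p q K} := by
  refine ⟨0, fun d hd => ?_⟩
  obtain ⟨K, hK, rfl⟩ := hd
  exact kd_nonneg hK

lemma ikd_nonneg {p : α → ℝ} {q : β → ℝ} (hp : IsProb p) (hq : IsProb q) :
    0 ≤ ikd p q :=
  le_csInf (couplingSet_nonempty hp hq) (fun d hd => by
    obtain ⟨K, hK, rfl⟩ := hd; exact kd_nonneg hK)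

end Helpers

section Tensor

variable {X Y : Type*} [Fintype X] [Fintype Y]

lemma powDist_append {p : X → ℝ} {m n : ℕ} (f : Fin m → X) (g : Fin n → X) :
    powDist p (m + n) (Fin.append f g) = powDist p m f * powDist p n g := by
  unfold powDist
  rw [Fin.prod_univ_add]
  simp [Fin.append_left, Fin.append_right]

lemma shannonEntropy_powDist_add {p : X → ℝ} (hp : IsProb p) (m n : ℕ) :
    shannonEntropy (powDist p (m + n))
      = shannonEntropy (powDist p m) + shannonEntropy (powDist p n) := by
  have h1 : shannonEntropy (fun z : (Fin m → X) × (Fin n → X) =>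
      powDist p (m + n) (Fin.appendEquiv m n z)) = shannonEntropy (powDist p (m + n)) :=
    shannonEntropy_comp_equiv (Fin.appendEquiv m n) (powDist p (m + n))
  rw [← h1]
  have h2 : (fun z : (Fin m → X) × (Fin n → X) =>
      powDist p (m + n) (Fin.appendEquiv m n z))
      = fun z => powDist p m z.1 * powDist p n z.2 := by
    funext z
    exact powDist_append z.1 z.2
  rw [h2]
  exact shannonEntropy_prodMul (isProb_powDist hp m) (isProb_powDist hp n)

/-- The tensor product of two couplings, as a coupling of the product spaces. -/
noncomputable def tensorK {m n : ℕ}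
    (K1 : (Fin m → X) × (Fin m → Y) → ℝ) (K2 : (Fin n → X) × (Fin n → Y) → ℝ) :
    (Fin (m + n) → X) × (Fin (m + n) → Y) → ℝ :=
  fun fg =>
    K1 (((Fin.appendEquiv m n).symm fg.1).1, ((Fin.appendEquiv m n).symm fg.2).1) *
    K2 (((Fin.appendEquiv m n).symm fg.1).2, ((Fin.appendEquiv m n).symm fg.2).2)

/-- The equiv along which `tensorK` is a product. -/
noncomputable def tensorE (X Y : Type*) (m n : ℕ) :
    ((Fin (m + n) → X) × (Fin (m + n) → Y)) ≃
      (((Fin m → X) × (Fin m → Y)) × ((Fin n → X) × (Fin n → Y))) :=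
  ((Fin.appendEquiv m n).symm.prodCongr (Fin.appendEquiv m n).symm).trans
    (Equiv.prodProdProdComm _ _ _ _)

lemma tensorK_eq {m n : ℕ}
    (K1 : (Fin m → X) × (Fin m → Y) → ℝ) (K2 : (Fin n → X) × (Fin n → Y) → ℝ) :
    tensorK K1 K2 = (fun z => K1 z.1 * K2 z.2) ∘ (tensorE X Y m n) := rfl

lemma tensorK_isCoupling {p : X → ℝ} {q : Y → ℝ} {m n : ℕ}
    {K1 : (Fin m → X) × (Fin m → Y) → ℝ} {K2 : (Fin n → X) × (Fin n → Y) → ℝ}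
    (h1 : IsCoupling (powDist p m) (powDist q m) K1)
    (h2 : IsCoupling (powDist p n) (powDist q n) K2) :
    IsCoupling (powDist p (m + n)) (powDist q (m + n)) (tensorK K1 K2) := by
  have hK1 := h1.1.1
  have hK2 := h2.1.1
  refine ⟨⟨fun x => mul_nonneg (hK1 _) (hK2 _), ?_⟩, fun f => ?_, fun g => ?_⟩
  · calc ∑ x, tensorK K1 K2 x
        = ∑ z : ((Fin m → X) × (Fin m → Y)) × ((Fin n → X) × (Fin n → Y)),
            K1 z.1 * K2 z.2 :=
          Equiv.sum_comp (tensorE X Y m n) (fun z => K1 z.1 * K2 z.2)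
      _ = 1 := by rw [sum_prod_fst_snd K1 K2, h1.1.2, h2.1.2, mul_one]
  · -- first marginal
    have := Equiv.sum_comp (Fin.appendEquiv m n)
      (fun g => tensorK K1 K2 (f, g))
    rw [← this]
    have heach : ∀ z : (Fin m → Y) × (Fin n → Y),
        tensorK K1 K2 (f, Fin.appendEquiv m n z)
          = K1 (((Fin.appendEquiv m n).symm f).1, z.1) *
            K2 (((Fin.appendEquiv m n).symm f).2, z.2) := by
      intro z; simp [tensorK]
    rw [Fintype.sum_congr _ _ heach,
      sum_prod_fst_snd (fun g1 => K1 (((Fin.appendEquiv m n).symm f).1, g1))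
        (fun g2 => K2 (((Fin.appendEquiv m n).symm f).2, g2)),
      h1.2.1, h2.2.1]
    have : f = Fin.append ((Fin.appendEquiv m n).symm f).1 ((Fin.appendEquiv m n).symm f).2 := by
      simp [Fin.append_castAdd_natAdd]
    conv_rhs => rw [this]
    rw [powDist_append]
  · -- second marginal
    have := Equiv.sum_comp (Fin.appendEquiv m n)
      (fun f => tensorK K1 K2 (f, g))
    rw [← this]
    have heach : ∀ z : (Fin m → X) × (Fin n → X),
        tensorK K1 K2 (Fin.appendEquiv m n z, g)
          = K1 (z.1, ((Fin.appendEquiv m n).symm g).1) *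
            K2 (z.2, ((Fin.appendEquiv m n).symm g).2) := by
      intro z; simp [tensorK]
    rw [Fintype.sum_congr _ _ heach,
      sum_prod_fst_snd (fun f1 => K1 (f1, ((Fin.appendEquiv m n).symm g).1))
        (fun f2 => K2 (f2, ((Fin.appendEquiv m n).symm g).2)),
      h1.2.2, h2.2.2]
    have : g = Fin.append ((Fin.appendEquiv m n).symm g).1 ((Fin.appendEquiv m n).symm g).2 := by
      simp [Fin.append_castAdd_natAdd]
    conv_rhs => rw [this]
    rw [powDist_append]

lemma tensorK_kd {p : X → ℝ} {q : Y → ℝ} (hp : IsProb p) (hq : IsProb q) {m n : ℕ}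
    {K1 : (Fin m → X) × (Fin m → Y) → ℝ} {K2 : (Fin n → X) × (Fin n → Y) → ℝ}
    (h1 : IsCoupling (powDist p m) (powDist q m) K1)
    (h2 : IsCoupling (powDist p n) (powDist q n) K2) :
    kd (powDist p (m + n)) (powDist q (m + n)) (tensorK K1 K2)
      = kd (powDist p m) (powDist q m) K1 + kd (powDist p n) (powDist q n) K2 := by
  have hH : shannonEntropy (tensorK K1 K2) = shannonEntropy K1 + shannonEntropy K2 := by
    calc shannonEntropy (tensorK K1 K2)
        = shannonEntropy (fun z : ((Fin m → X) × (Fin m → Y)) × ((Fin n → X) × (Fin n → Y)) =>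
            K1 z.1 * K2 z.2) :=
          shannonEntropy_comp_equiv (tensorE X Y m n) (fun z => K1 z.1 * K2 z.2)
      _ = shannonEntropy K1 + shannonEntropy K2 := shannonEntropy_prodMul h1.1 h2.1
  unfold kd
  rw [hH, shannonEntropy_powDist_add hp m n, shannonEntropy_powDist_add hq m n]
  ring

end Tensor

/-- The sequence `a n = ikd(Xⁿ, Yⁿ)` is subadditive, hence `a n / n` converges
to its infimum (Fekete's lemma). -/
theorem stmt_5 {X Y : Type*} [Fintype X] [Fintype Y]
    (p : X → ℝ) (q : Y → ℝ) (hp : IsProb p) (hq : IsProb q) :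
    let a : ℕ → ℝ := fun n => ikd (powDist p n) (powDist q n)
    (∀ m n : ℕ, 1 ≤ m → 1 ≤ n → a (m + n) ≤ a m + a n) ∧
      Tendsto (fun n : ℕ => a n / n) atTop
        (nhds (⨅ n : ℕ+, a n / (n : ℝ))) := by
  intro a
  have hsub : ∀ m n : ℕ, a (m + n) ≤ a m + a n := by
    intro m n
    have hne1 := couplingSet_nonempty (isProb_powDist hp m) (isProb_powDist hq m)
    have hne2 := couplingSet_nonempty (isProb_powDist hp n) (isProb_powDist hq n)
    have key : ∀ d1 ∈ {d : ℝ | ∃ K, IsCoupling (powDist p m) (powDist q m) K ∧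
        d = kd (powDist p m) (powDist q m) K},
        ∀ d2 ∈ {d : ℝ | ∃ K, IsCoupling (powDist p n) (powDist q n) K ∧
        d = kd (powDist p n) (powDist q n) K},
        a (m + n) ≤ d1 + d2 := by
      rintro d1 ⟨K1, hK1, rfl⟩ d2 ⟨K2, hK2, rfl⟩
      have hmem : kd (powDist p m) (powDist q m) K1 + kd (powDist p n) (powDist q n) K2
          ∈ {d : ℝ | ∃ K, IsCoupling (powDist p (m + n)) (powDist q (m + n)) K ∧
            d = kd (powDist p (m + n)) (powDist q (m + n)) K} :=
        ⟨tensorK K1 K2, tensorK_isCoupling hK1 hK2, (tensorK_kd hp hq hK1 hK2).symm⟩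
      exact csInf_le (couplingSet_bddBelow _ _) hmem
    have step1 : ∀ d2 ∈ {d : ℝ | ∃ K, IsCoupling (powDist p n) (powDist q n) K ∧
        d = kd (powDist p n) (powDist q n) K}, a (m + n) - d2 ≤ a m := by
      intro d2 hd2
      refine le_csInf hne1 fun d1 hd1 => ?_
      linarith [key d1 hd1 d2 hd2]
    have step2 : a (m + n) - a m ≤ a n := by
      refine le_csInf hne2 fun d2 hd2 => ?_
      linarith [step1 d2 hd2]
    linarith
  have hnonneg : ∀ n, 0 ≤ a n := fun n =>
    ikd_nonneg (isProb_powDist hp n) (isProb_powDist hq n)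
  refine ⟨fun m n _ _ => hsub m n, ?_⟩
  have hSub : Subadditive a := hsub
  have hbdd : BddBelow (Set.range fun n : ℕ => a n / n) := by
    refine ⟨0, fun x hx => ?_⟩
    obtain ⟨n, rfl⟩ := hx
    exact div_nonneg (hnonneg n) (Nat.cast_nonneg n)
  have hlim := hSub.tendsto_lim hbdd
  have heq : hSub.lim = ⨅ n : ℕ+, a n / (n : ℝ) := by
    rw [Subadditive.lim, ← sInf_range]
    congr 1
    ext x
    constructor
    · rintro ⟨n, hn, rfl⟩
      exact ⟨⟨n, hn⟩, rfl⟩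
    · rintro ⟨n, rfl⟩
      exact ⟨(n : ℕ), n.2, rfl⟩
  rwa [heq] at hlim
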